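/- For all n ≥ 0, the nth Schröder number satisfies r_n = 2^n + Σ_{k=1}^{n−1} 2^k · c(n,k), where c(n,k) is the number of partitions λ = (λ_1 ≥ λ_2 ≥ ⋯ ≥ λ_n ≥ 0) with λ_i ≤ n+1−i for all i, having exactly k indices i with λ_i > λ_{i+1} (setting λ_{n+1} := 0) and i + λ_i < n+1. -/

import Mathlib

/-- The large Schröder numbers: `r 0 = 1` and
`r n = r (n-1) + ∑_{i=0}^{n-1} r i * r (n-1-i)` for `n ≥ 1`. -/
def schroeder : ℕ → ℕ
  | 0 => 1
  | n + 1 => schroeder n + ∑ i ∈ (Finset.range (n + 1)).attach,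
      schroeder i.1 * schroeder (n - i.1)
decreasing_by
  · exact Nat.lt_succ_self n
  · exact Nat.lt_succ_of_le (Nat.le_of_lt_succ (Finset.mem_range.mp i.2))
  · exact Nat.lt_succ_of_le (Nat.sub_le n i.1)

/-- `c n k`: the number of Young diagrams fitting in the staircase `(n, n-1, …, 1)`
(encoded as antitone `f : ℕ → ℕ` with `f i ≤ n - i`, where `f i` is the part `λ_{i+1}`)
having exactly `k` corners `(i, λ_i)` (with `λ_i > λ_{i+1}`) satisfying `i + λ_i < n + 1`. -/
noncomputable def lowCornerCount (n k : ℕ) : ℕ :=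
  Nat.card {f : ℕ → ℕ // Antitone f ∧ (∀ i, f i ≤ n - i) ∧
    {i : ℕ | f (i + 1) < f i ∧ (i + 1) + f i < n + 1}.ncard = k}

noncomputable section
open Finset
open scoped Classical

/-- prepend a part -/
def consF (t : ℕ) (f : ℕ → ℕ) : ℕ → ℕ
  | 0 => t
  | i + 1 => f i

/-- diagrams in the staircase `δ_n` with first part `≤ m` -/
def Dg : ℕ → ℕ → Finset (ℕ → ℕ)
  | 0, _ => {fun _ => 0}
  | n+1, m => (range (min m (n+1) + 1)).biUnion fun t => (Dg n t).image (consF t)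

/-- number of low corners -/
def lcF (n : ℕ) (f : ℕ → ℕ) : ℕ :=
  ((range n).filter fun i => f (i+1) < f i ∧ i + 1 + f i < n + 1).card

/-- weighted count -/
def Fw (a n m : ℕ) : ℕ := ∑ f ∈ Dg n m, a ^ lcF n f

lemma consF_inj (t : ℕ) : Function.Injective (consF t) := by
  intro f g h
  funext i
  have := congrFun h (i+1)
  simpa [consF] using this

lemma mem_Dg : ∀ (n m : ℕ) (f : ℕ → ℕ),
    f ∈ Dg n m ↔ (Antitone f ∧ (∀ i, f i ≤ n - i) ∧ f 0 ≤ m)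
  | 0, m, f => by
      simp only [Dg, mem_singleton]
      constructor
      · rintro rfl
        exact ⟨antitone_const, fun i => by simp, by simp⟩
      · rintro ⟨hA, hB, hm⟩
        funext i
        have := hB i
        omega
  | n+1, m, f => by
      simp only [Dg, mem_biUnion, mem_image, mem_range]
      constructor
      · rintro ⟨t, ht, g, hg, rfl⟩
        obtain ⟨hA, hB, h0⟩ := (mem_Dg n t g).1 hg
        have ht' : t ≤ min m (n+1) := by omega
        refine ⟨?_, ?_, ?_⟩
        · apply antitone_nat_of_succ_le
          intro i
          cases i with
          | zero => simpa [consF] using h0.trans (le_refl t)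
          | succ j => exact hA (Nat.le_succ j)
        · intro i
          cases i with
          | zero => simpa [consF] using le_trans ht' (min_le_right _ _)
          | succ j =>
            have := hB j
            simp only [consF]
            omega
        · simpa [consF] using le_trans ht' (min_le_left _ _)
      · rintro ⟨hA, hB, hm⟩
        have h0 : f 0 ≤ n + 1 := by have := hB 0; omega
        refine ⟨f 0, by omega, fun i => f (i+1), (mem_Dg n (f 0) _).2 ⟨?_, ?_, ?_⟩, ?_⟩
        · intro i j hij
          exact hA (by omega)
        · intro i
          have := hB (i+1)
          omega
        · exact hA (by omega)
        · funext i
          cases i <;> rfl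

lemma Dg_eq_of_le {n m m' : ℕ} (h : n ≤ m) (h' : n ≤ m') : Dg n m = Dg n m' := by
  ext f
  simp only [mem_Dg]
  constructor <;> rintro ⟨hA, hB, h0⟩ <;>
    exact ⟨hA, hB, le_trans (by simpa using hB 0) (by omega)⟩

lemma Dg_filter (n m : ℕ) : (Dg n (m+1)).filter (fun g => g 0 ≤ m) = Dg n m := by
  ext g
  simp only [mem_filter, mem_Dg]
  constructor
  · rintro ⟨⟨hA, hB, _⟩, h⟩; exact ⟨hA, hB, h⟩
  · rintro ⟨hA, hB, h⟩; exact ⟨⟨hA, hB, by omega⟩, h⟩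

lemma lcF_cons (n t : ℕ) (g : ℕ → ℕ) :
    lcF (n+1) (consF t g) = (if g 0 < t ∧ t < n + 1 then 1 else 0) + lcF n g := by
  unfold lcF
  rw [Finset.card_filter, Finset.card_filter, Finset.sum_range_succ']
  rw [add_comm]
  congr 1
  · simp only [consF]
    exact if_congr (and_congr_right fun _ => by omega) rfl rfl
  · apply Finset.sum_congr rfl
    intro i _
    simp only [consF]
    exact if_congr (and_congr_right fun _ => by omega) rfl rfl

lemma Fw_step (a n m : ℕ) (hm : m ≤ n + 1) :
    Fw a (n+1) m = ∑ t ∈ range (m+1), ∑ g ∈ Dg n t,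
      a ^ lcF n g * (if g 0 < t ∧ t < n + 1 then a else 1) := by
  have hmin : min m (n+1) = m := min_eq_left hm
  unfold Fw
  rw [show Dg (n+1) m = (range (m + 1)).biUnion fun t => (Dg n t).image (consF t) from by
    rw [show Dg (n+1) m
        = (range (min m (n+1) + 1)).biUnion fun t => (Dg n t).image (consF t) from rfl, hmin]]
  rw [Finset.sum_biUnion ?hd]
  case hd =>
    intro t1 _ t2 _ hne
    simp only [Finset.disjoint_left]
    intro f h1 h2
    simp only [Finset.mem_coe, mem_image] at h1 h2
    obtain ⟨g1, _, rfl⟩ := h1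
    obtain ⟨g2, _, he⟩ := h2
    have h0 := congrFun he 0
    simp only [consF] at h0
    exact hne h0.symm
  apply Finset.sum_congr rfl
  intro t _
  rw [Finset.sum_image (fun x _ y _ h => consF_inj t h)]
  apply Finset.sum_congr rfl
  intro g _
  rw [lcF_cons, pow_add]
  split_ifs <;> simp [mul_comm]

lemma Fw_zero (a m : ℕ) : Fw a 0 m = 1 := by
  unfold Fw
  rw [show Dg 0 m = {fun _ => 0} from rfl, Finset.sum_singleton]
  simp [lcF]

lemma Fw_bot (a : ℕ) : ∀ n, Fw a n 0 = 1 := by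
  intro n
  induction n with
  | zero => exact Fw_zero a 0
  | succ n ih =>
    rw [Fw_step a n 0 (by omega), Finset.sum_range_succ, Finset.range_zero,
      Finset.sum_empty, zero_add]
    calc ∑ g ∈ Dg n 0, a ^ lcF n g * (if g 0 < 0 ∧ 0 < n + 1 then a else 1)
        = ∑ g ∈ Dg n 0, a ^ lcF n g := by
          apply Finset.sum_congr rfl; intro g _; simp
      _ = 1 := ih

lemma rec_mid (a n m : ℕ) (h : m + 1 ≤ n) :
    Fw a (n+1) (m+1) + Fw a n m = Fw a (n+1) m + a * Fw a n m + Fw a n (m+1) := by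
  rw [Fw_step a n (m+1) (by omega), Fw_step a n m (by omega), Finset.sum_range_succ]
  have key : ∑ g ∈ Dg n (m+1), a ^ lcF n g * (if g 0 < m + 1 ∧ m + 1 < n + 1 then a else 1)
      = a * Fw a n m
        + ∑ g ∈ (Dg n (m+1)).filter (fun g => ¬ g 0 ≤ m), a ^ lcF n g := by
    rw [← Finset.sum_filter_add_sum_filter_not (Dg n (m+1)) (fun g => g 0 ≤ m)
        (fun g => a ^ lcF n g * (if g 0 < m + 1 ∧ m + 1 < n + 1 then a else 1))]
    congr 1
    · rw [Dg_filter, Fw, Finset.mul_sum]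
      refine Finset.sum_congr rfl fun g hg => ?_
      have hg0 : g 0 ≤ m := ((mem_Dg n m g).1 hg).2.2
      have hc : (if g 0 < m + 1 ∧ m + 1 < n + 1 then a else 1) = a :=
        if_pos ⟨by omega, by omega⟩
      rw [hc]; ring
    · refine Finset.sum_congr rfl fun g hg => ?_
      have hg0 : ¬ g 0 ≤ m := (Finset.mem_filter.1 hg).2
      have hc : (if g 0 < m + 1 ∧ m + 1 < n + 1 then a else 1) = 1 :=
        if_neg (by omega)
      rw [hc, mul_one]
  have key2 : Fw a n (m+1)
      = Fw a n m + ∑ g ∈ (Dg n (m+1)).filter (fun g => ¬ g 0 ≤ m), a ^ lcF n g := by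
    unfold Fw
    rw [← Finset.sum_filter_add_sum_filter_not (Dg n (m+1)) (fun g => g 0 ≤ m)
        (fun g => a ^ lcF n g), Dg_filter]
  rw [key, key2]
  ring

lemma rec_diag (a n : ℕ) : Fw a (n+1) (n+1) = Fw a (n+1) n + Fw a n n := by
  rw [Fw_step a n (n+1) le_rfl, Finset.sum_range_succ, ← Fw_step a n n (by omega)]
  congr 1
  calc ∑ g ∈ Dg n (n+1), a ^ lcF n g * (if g 0 < n + 1 ∧ n + 1 < n + 1 then a else 1)
      = ∑ g ∈ Dg n (n+1), a ^ lcF n g := by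
        apply Finset.sum_congr rfl; intro g _; simp
    _ = Fw a n n := by
        rw [show Dg n (n+1) = Dg n n from Dg_eq_of_le (by omega) le_rfl, Fw]

lemma Fw_def (a n m : ℕ) : Fw a n m = ∑ f ∈ Dg n m, a ^ lcF n f := rfl

lemma F0_eq (n : ℕ) : ∀ m, m ≤ n → Fw 0 (n+1) m = Fw 0 n m := by
  intro m
  induction m with
  | zero => intro _; rw [Fw_bot, Fw_bot]
  | succ m ih =>
    intro h
    have h1 := rec_mid 0 n m h
    have h2 := ih (by omega)
    simp only [zero_mul, add_zero] at h1
    omega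

lemma F0_diag : ∀ n, Fw 0 n n = 2 ^ n := by
  intro n
  induction n with
  | zero => simpa using Fw_zero 0 0
  | succ n ih =>
    rw [rec_diag, F0_eq n n le_rfl, ih]
    ring

lemma rec_mid2 {n m : ℕ} (h : m + 1 ≤ n) :
    Fw 2 (n+1) (m+1) = Fw 2 (n+1) m + Fw 2 n m + Fw 2 n (m+1) := by
  have := rec_mid 2 n m h
  omega

lemma keyI : ∀ (m d : ℕ),
    Fw 2 (m+d+1) m = ∑ k ∈ range (m+1), Fw 2 k k * Fw 2 (m+d-k) (m-k) := by
  intro m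
  induction m with
  | zero =>
    intro d
    simp [Fw_bot, Fw_zero]
  | succ m ihm =>
    intro d
    have e1 : ∀ c, Fw 2 (m+c+1) m = ∑ k ∈ range (m+1), Fw 2 k k * Fw 2 (m+c-k) (m-k) :=
      fun c => ihm c
    induction d with
    | zero =>
      simp only [Nat.add_zero]
      have hrec := rec_mid2 (n := m+1) (m := m) le_rfl
      rw [Finset.sum_range_succ, show m+1-(m+1) = 0 from by omega, Fw_zero, mul_one,
        hrec, e1 1] at *
      have h0 := e1 0
      simp only [Nat.add_zero] at h0
      rw [h0]
      have hT : (∑ k ∈ range (m+1), Fw 2 k k * Fw 2 (m+1-k) (m-k))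
          + (∑ k ∈ range (m+1), Fw 2 k k * Fw 2 (m-k) (m-k))
          = ∑ k ∈ range (m+1), Fw 2 k k * Fw 2 (m+1-k) (m+1-k) := by
        rw [← Finset.sum_add_distrib]
        refine Finset.sum_congr rfl fun k hk => ?_
        have hk' : k ≤ m := Nat.lt_succ_iff.mp (Finset.mem_range.mp hk)
        rw [← mul_add]
        congr 1
        have hd := rec_diag 2 (m - k)
        rw [show m + 1 - k = m - k + 1 from by omega]
        omega
      rw [← hT]
    | succ d ihd =>
      have hrec := rec_mid2 (n := m + d + 2) (m := m) (by omega)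
      have he1 : Fw 2 (m+d+2+1) m = ∑ k ∈ range (m+1), Fw 2 k k * Fw 2 (m+d+2-k) (m-k) := by
        have h := e1 (d+2)
        rw [show m + (d+2) + 1 = m+d+2+1 from by omega] at h
        rw [h]
        refine Finset.sum_congr rfl fun k hk => ?_
        rw [show m + (d+2) - k = m + d + 2 - k from by omega]
      have he2 : Fw 2 (m+d+2) m = ∑ k ∈ range (m+1), Fw 2 k k * Fw 2 (m+d+1-k) (m-k) := by
        have h := e1 (d+1)
        rw [show m + (d+1) + 1 = m+d+2 from by omega] at h
        rw [h]
        refine Finset.sum_congr rfl fun k hk => ?_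
        rw [show m + (d+1) - k = m + d + 1 - k from by omega]
      have he3 : Fw 2 (m+d+2) (m+1)
          = (∑ k ∈ range (m+1), Fw 2 k k * Fw 2 (m+d+1-k) (m+1-k)) + Fw 2 (m+1) (m+1) := by
        have h := ihd
        rw [show m + 1 + d + 1 = m+d+2 from by omega, Finset.sum_range_succ,
          show m+1-(m+1) = 0 from by omega, Fw_bot, mul_one] at h
        rw [h]
        congr 1
        refine Finset.sum_congr rfl fun k hk => ?_
        rw [show m + 1 + d - k = m + d + 1 - k from by omega]
      rw [show m + 1 + (d+1) + 1 = m + d + 2 + 1 from by omega, hrec,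
        Finset.sum_range_succ, show m+1-(m+1) = 0 from by omega, Fw_bot, mul_one,
        he1, he2, he3]
      have hT : (∑ k ∈ range (m+1), Fw 2 k k * Fw 2 (m+d+2-k) (m-k))
          + (∑ k ∈ range (m+1), Fw 2 k k * Fw 2 (m+d+1-k) (m-k))
          + (∑ k ∈ range (m+1), Fw 2 k k * Fw 2 (m+d+1-k) (m+1-k))
          = ∑ k ∈ range (m+1), Fw 2 k k * Fw 2 (m+1+(d+1)-k) (m+1-k) := by
        rw [← Finset.sum_add_distrib, ← Finset.sum_add_distrib]
        refine Finset.sum_congr rfl fun k hk => ?_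
        have hk' : k ≤ m := Nat.lt_succ_iff.mp (Finset.mem_range.mp hk)
        rw [← mul_add, ← mul_add]
        congr 1
        have hrec2 := rec_mid2 (n := m + d + 1 - k) (m := m - k) (by omega)
        rw [show m + d + 1 - k + 1 = m + d + 2 - k from by omega,
          show m - k + 1 = m + 1 - k from by omega] at hrec2
        rw [show m + 1 + (d + 1) - k = m + d + 2 - k from by omega]
        omega
      rw [← hT]
      ring

lemma schroeder_eq_Fw : ∀ n, schroeder n = Fw 2 n n := by
  intro n
  induction n using Nat.strong_induction_on with
  | _ n ih =>
    match n with
    | 0 => rw [schroeder, Fw_zero]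
    | n + 1 =>
      rw [schroeder]
      have hat := Finset.sum_attach (range (n+1)) (fun i => schroeder i * schroeder (n - i))
      rw [hat]
      have hk := keyI n 0
      simp only [Nat.add_zero] at hk
      rw [rec_diag, hk, ih n (by omega)]
      have hs : ∑ k ∈ range (n+1), schroeder k * schroeder (n-k)
          = ∑ k ∈ range (n+1), Fw 2 k k * Fw 2 (n-k) (n-k) := by
        refine Finset.sum_congr rfl fun k hkk => ?_
        have hk1 : k < n + 1 := Finset.mem_range.mp hkk
        rw [ih k (by omega), ih (n - k) (by omega)]
      rw [hs]
      exact add_comm _ _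

lemma lc_set (n : ℕ) (f : ℕ → ℕ) :
    {i : ℕ | f (i + 1) < f i ∧ (i + 1) + f i < n + 1}.ncard = lcF n f := by
  have hset : {i : ℕ | f (i + 1) < f i ∧ (i + 1) + f i < n + 1}
      = ↑((range n).filter fun i => f (i+1) < f i ∧ i + 1 + f i < n + 1) := by
    ext i
    simp only [Set.mem_setOf_eq, Finset.coe_filter, Finset.mem_range]
    constructor
    · rintro ⟨h1, h2⟩
      exact ⟨by omega, h1, h2⟩
    · rintro ⟨_, h1, h2⟩
      exact ⟨h1, h2⟩
  rw [hset, Set.ncard_coe_finset, lcF]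

lemma lcc_eq (n k : ℕ) :
    lowCornerCount n k = ((Dg n n).filter fun f => lcF n f = k).card := by
  have hset : {f : ℕ → ℕ | Antitone f ∧ (∀ i, f i ≤ n - i) ∧
      {i : ℕ | f (i + 1) < f i ∧ (i + 1) + f i < n + 1}.ncard = k}
      = ↑((Dg n n).filter fun f => lcF n f = k) := by
    ext f
    simp only [Set.mem_setOf_eq, Finset.coe_filter, mem_Dg, lc_set]
    constructor
    · rintro ⟨h1, h2, h3⟩
      exact ⟨⟨h1, h2, by simpa using h2 0⟩, h3⟩
    · rintro ⟨⟨h1, h2, _⟩, h3⟩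
      exact ⟨h1, h2, h3⟩
  calc lowCornerCount n k
      = Nat.card ↥{f : ℕ → ℕ | Antitone f ∧ (∀ i, f i ≤ n - i) ∧
          {i : ℕ | f (i + 1) < f i ∧ (i + 1) + f i < n + 1}.ncard = k} := rfl
    _ = ({f : ℕ → ℕ | Antitone f ∧ (∀ i, f i ≤ n - i) ∧
          {i : ℕ | f (i + 1) < f i ∧ (i + 1) + f i < n + 1}.ncard = k}).ncard :=
        Nat.card_coe_set_eq _
    _ = _ := by rw [hset, Set.ncard_coe_finset]

lemma lcF_lt (n : ℕ) (f : ℕ → ℕ) : lcF (n+1) f < n + 1 := by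
  have hsub : ((range (n+1)).filter fun i => f (i+1) < f i ∧ i + 1 + f i < n + 1 + 1)
      ⊆ range n := by
    intro i hi
    simp only [Finset.mem_filter, Finset.mem_range] at hi ⊢
    omega
  have := Finset.card_le_card hsub
  rw [Finset.card_range] at this
  rw [lcF]
  omega

lemma F0_card (n : ℕ) : Fw 0 n n = ((Dg n n).filter fun f => lcF n f = 0).card := by
  rw [Fw_def, Finset.card_filter]
  refine Finset.sum_congr rfl fun f _ => ?_
  rcases eq_or_ne (lcF n f) 0 with h | h
  · rw [h]; simp
  · rw [zero_pow h, if_neg h]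

/-- `r_n = 2^n + ∑_{k=1}^{n-1} 2^k c(n,k)`. -/
theorem schroeder_eq_sum_low_corners (n : ℕ) :
    schroeder n = 2 ^ n + ∑ k ∈ Finset.Icc 1 (n - 1), 2 ^ k * lowCornerCount n k := by
  match n with
  | 0 =>
    rw [schroeder]
    simp
  | n + 1 =>
    rw [schroeder_eq_Fw, Fw_def]
    have hfib := Finset.sum_fiberwise_of_maps_to (s := Dg (n+1) (n+1))
      (g := fun f => lcF (n+1) f) (t := range (n+1))
      (fun f _ => Finset.mem_range.mpr (lcF_lt n f)) (fun f => 2 ^ lcF (n+1) f)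
    rw [← hfib]
    have hterm : ∀ k, ∑ f ∈ (Dg (n+1) (n+1)).filter (fun f => lcF (n+1) f = k),
        2 ^ lcF (n+1) f = 2 ^ k * lowCornerCount (n+1) k := by
      intro k
      have hc : ∀ f ∈ (Dg (n+1) (n+1)).filter (fun f => lcF (n+1) f = k),
          2 ^ lcF (n+1) f = 2 ^ k := fun f hf => by rw [(Finset.mem_filter.mp hf).2]
      rw [Finset.sum_congr rfl hc, Finset.sum_const, smul_eq_mul, mul_comm, lcc_eq]
    have hsplit : range (n+1) = insert 0 (Finset.Icc 1 (n+1-1)) := by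
      ext x
      simp only [Finset.mem_range, Finset.mem_insert, Finset.mem_Icc]
      omega
    rw [Finset.sum_congr rfl (fun k _ => hterm k), hsplit,
      Finset.sum_insert (by simp)]
    congr 1
    · rw [pow_zero, one_mul, lcc_eq, ← F0_card, F0_diag]
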